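/- Let n be a positive integer, p ∈ [0,1], and let G_{n,p} be the binomial random graph on n labeled vertices where each of the C(n,2) possible edges is included independently with probability p. Then for every t ≥ 0, P[ |log r(G_{n,p}) − E(log r(G_{n,p}))| > t ] ≤ 2·exp( −t² / (32 n (log n)²) ), where log is base 2. In particular, for any function p = p(n) and any function t(n) with t(n)/(√n · log n) → ∞, the probability that |log r(G_{n,p}) − E(log r(G_{n,p}))| > t(n) tends to 0 as n → ∞. -/

import Mathlib

open MeasureTheory

/-- A 2-coloring `χ` of the edges of `K_N` contains a monochromatic copy of `H`. -/
def HasMonoCopy {α : Type*} (H : SimpleGraph α) (N : ℕ) (χ : Sym2 (Fin N) → Bool) : Prop :=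
  ∃ (b : Bool) (f : α ↪ Fin N), ∀ u v : α, H.Adj u v → χ s(f u, f v) = b

/-- The Ramsey number of a graph `H`. -/
noncomputable def ramseyNumber {α : Type*} (H : SimpleGraph α) : ℕ :=
  sInf {N : ℕ | ∀ χ : Sym2 (Fin N) → Bool, HasMonoCopy H N χ}

/-- The sample space for `G(n,p)`: one Boolean per potential edge (non-diagonal pair). -/
abbrev ErdosRenyiOmega (n : ℕ) : Type := {e : Sym2 (Fin n) // ¬ e.IsDiag} → Bool

/-- The product Bernoulli(`p`) measure on `ErdosRenyiOmega n`, modelling `G(n,p)` with all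
edges present independently with probability `p`. -/
noncomputable def erdosRenyi (n : ℕ) (p : ENNReal) (hp : p ≤ 1) :
    Measure (ErdosRenyiOmega n) :=
  Measure.pi fun _ => (PMF.bernoulli p.toNNReal
    (by simpa using ENNReal.toNNReal_mono ENNReal.one_ne_top hp)).toMeasure

/-- The graph on `Fin n` determined by a sample point. -/
def sampleGraph (n : ℕ) (ω : ErdosRenyiOmega n) : SimpleGraph (Fin n) :=
  SimpleGraph.fromEdgeSet {e | ∃ h : ¬ e.IsDiag, ω ⟨e, h⟩ = true}

/-- The log (base 2) of the Ramsey number of the sampled random graph. -/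
noncomputable def logRamsey (n : ℕ) (ω : ErdosRenyiOmega n) : ℝ :=
  Real.logb 2 (ramseyNumber (sampleGraph n ω))

open Finset

/-- Hoeffding-type one-step bound. -/
lemma step_mgf {K : Type*} [Fintype K] (w : K → ℝ) (hw : ∀ k, 0 ≤ w k)
    (hw1 : ∑ k, w k = 1) (h : K → ℝ) (c : ℝ) (hosc : ∀ a b, |h a - h b| ≤ c) (l : ℝ) :
    ∑ k, w k * Real.exp (l * (h k - ∑ j, w j * h j)) ≤ Real.exp (l ^ 2 * c ^ 2 / 2) := by
  rcases isEmpty_or_nonempty K with hK | hK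
  · rw [Finset.univ_eq_empty] at hw1; simp at hw1
  set m := ∑ j, w j * h j with hm
  have hYsum : ∑ k, w k * (h k - m) = 0 := by
    simp only [mul_sub, Finset.sum_sub_distrib, ← Finset.sum_mul, hw1, one_mul, ← hm, sub_self]
  have hYc : ∀ k, |h k - m| ≤ c := by
    intro k
    have e1 : h k - m = ∑ j, w j * (h k - h j) := by
      simp only [mul_sub, Finset.sum_sub_distrib, ← Finset.sum_mul, hw1, one_mul, ← hm]
    rw [e1]
    calc |∑ j, w j * (h k - h j)| ≤ ∑ j, |w j * (h k - h j)| := Finset.abs_sum_le_sum_abs _ _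
      _ ≤ ∑ j, w j * c := by
          apply Finset.sum_le_sum; intro j _
          rw [abs_mul, abs_of_nonneg (hw j)]
          exact mul_le_mul_of_nonneg_left (hosc k j) (hw j)
      _ = c := by rw [← Finset.sum_mul, hw1, one_mul]
  have hc0 : 0 ≤ c := le_trans (abs_nonneg _) (hosc hK.some hK.some)
  rcases eq_or_lt_of_le hc0 with hc | hc
  · have hh : ∀ k, h k - m = 0 := by
      intro k; have := hYc k; rw [← hc] at this
      exact abs_eq_zero.mp (le_antisymm this (abs_nonneg _))
    have : ∀ k, w k * Real.exp (l * (h k - m)) = w k := by intro k; rw [hh k]; simp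
    rw [Finset.sum_congr rfl (fun k _ => this k), hw1, ← hc]
    simp
  · -- c > 0
    have key : ∀ k, Real.exp (l * (h k - m)) ≤
        ((c - (h k - m)) / (2 * c)) * Real.exp (-(l * c)) +
        ((c + (h k - m)) / (2 * c)) * Real.exp (l * c) := by
      intro k
      have hY := hYc k
      rw [abs_le] at hY
      have ha : (0:ℝ) ≤ (c - (h k - m)) / (2 * c) := by
        apply div_nonneg (by linarith [hY.2]) (by linarith)
      have hb : (0:ℝ) ≤ (c + (h k - m)) / (2 * c) := by
        apply div_nonneg (by linarith [hY.1]) (by linarith)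
      have hab : (c - (h k - m)) / (2 * c) + (c + (h k - m)) / (2 * c) = 1 := by
        field_simp; ring
      have harg : l * (h k - m) =
          ((c - (h k - m)) / (2 * c)) • (-(l * c)) + ((c + (h k - m)) / (2 * c)) • (l * c) := by
        simp only [smul_eq_mul]; field_simp; ring
      calc Real.exp (l * (h k - m))
          = Real.exp (((c - (h k - m)) / (2 * c)) • (-(l * c)) +
              ((c + (h k - m)) / (2 * c)) • (l * c)) := by rw [← harg]
        _ ≤ ((c - (h k - m)) / (2 * c)) • Real.exp (-(l * c)) +
              ((c + (h k - m)) / (2 * c)) • Real.exp (l * c) :=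
            convexOn_exp.2 (Set.mem_univ _) (Set.mem_univ _) ha hb hab
        _ = _ := by simp [smul_eq_mul]
    calc ∑ k, w k * Real.exp (l * (h k - m))
        ≤ ∑ k, w k * (((c - (h k - m)) / (2 * c)) * Real.exp (-(l * c)) +
            ((c + (h k - m)) / (2 * c)) * Real.exp (l * c)) := by
          apply Finset.sum_le_sum; intro k _
          exact mul_le_mul_of_nonneg_left (key k) (hw k)
      _ = (∑ k, w k * ((c - (h k - m)) / (2 * c))) * Real.exp (-(l * c)) +
            (∑ k, w k * ((c + (h k - m)) / (2 * c))) * Real.exp (l * c) := by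
          simp only [Finset.sum_mul, mul_add, ← Finset.sum_add_distrib, mul_assoc]
      _ = (1/2) * Real.exp (-(l * c)) + (1/2) * Real.exp (l * c) := by
          have e1 : ∑ k, w k * ((c - (h k - m)) / (2 * c)) = 1/2 := by
            have : ∀ k, w k * ((c - (h k - m)) / (2 * c)) =
                (w k * c - w k * (h k - m)) / (2 * c) := by intro k; ring
            rw [Finset.sum_congr rfl (fun k _ => this k), ← Finset.sum_div,
              Finset.sum_sub_distrib, hYsum, ← Finset.sum_mul, hw1]
            field_simp; ring
          have e2 : ∑ k, w k * ((c + (h k - m)) / (2 * c)) = 1/2 := by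
            have : ∀ k, w k * ((c + (h k - m)) / (2 * c)) =
                (w k * c + w k * (h k - m)) / (2 * c) := by intro k; ring
            rw [Finset.sum_congr rfl (fun k _ => this k), ← Finset.sum_div,
              Finset.sum_add_distrib, hYsum, ← Finset.sum_mul, hw1]
            field_simp; ring
          rw [e1, e2]
      _ = Real.cosh (l * c) := by rw [Real.cosh_eq]; ring
      _ ≤ Real.exp ((l * c) ^ 2 / 2) := Real.cosh_le_exp_half_sq _
      _ = Real.exp (l ^ 2 * c ^ 2 / 2) := by ring_nf

lemma mcdiarmid_mgf (m : ℕ) : ∀ (K : Fin m → Type) [inst : ∀ i, Fintype (K i)]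
    (w : ∀ i, K i → ℝ), (∀ i k, 0 ≤ w i k) → (∀ i, ∑ k, w i k = 1) →
    ∀ (f : (∀ i, K i) → ℝ) (c : Fin m → ℝ),
    (∀ (i : Fin m) (x y : ∀ i, K i), (∀ j, j ≠ i → x j = y j) → |f x - f y| ≤ c i) →
    ∀ (l : ℝ),
    ∑ x : ∀ i, K i, (∏ i, w i (x i)) *
        Real.exp (l * (f x - ∑ y : ∀ i, K i, (∏ i, w i (y i)) * f y))
      ≤ Real.exp (l ^ 2 * (∑ i, c i ^ 2) / 2) := by
  induction m with
  | zero =>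
    intro K inst w hw hw1 f c hlip l
    simp
  | succ m ih =>
    intro K inst w hw hw1 f c hlip l
    set W' : (∀ i : Fin m, K i.succ) → ℝ := fun x' => ∏ i, w i.succ (x' i) with hW'
    set g : (∀ i : Fin m, K i.succ) → ℝ := fun x' => ∑ k, w 0 k * f (Fin.cons k x') with hg
    have hW'nn : ∀ x', 0 ≤ W' x' := fun x' => Finset.prod_nonneg (fun i _ => hw _ _)
    have sumdec : ∀ (F : (∀ i, K i) → ℝ),
        ∑ x, F x = ∑ x' : ∀ i : Fin m, K i.succ, ∑ k : K 0, F (Fin.cons k x') := by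
      intro F
      rw [← (Fin.consEquiv K).sum_comp F, Fintype.sum_prod_type, Finset.sum_comm]
      rfl
    have proddec : ∀ (k : K 0) (x' : ∀ i : Fin m, K i.succ),
        (∏ i, w i (Fin.cons k x' i)) = w 0 k * W' x' := by
      intro k x'
      rw [Fin.prod_univ_succ]
      simp [hW']
    set Ef : ℝ := ∑ y : ∀ i, K i, (∏ i, w i (y i)) * f y with hEf
    have hEfg : Ef = ∑ x', W' x' * g x' := by
      rw [hEf, sumdec (fun y => (∏ i, w i (y i)) * f y)]
      apply Finset.sum_congr rfl; intro x' _
      rw [hg, Finset.mul_sum]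
      apply Finset.sum_congr rfl; intro k _
      rw [proddec]; ring
    have hosc0 : ∀ (x' : ∀ i : Fin m, K i.succ) (a b : K 0),
        |f (Fin.cons a x') - f (Fin.cons b x')| ≤ c 0 := by
      intro x' a b
      apply hlip 0
      intro j hj
      rcases Fin.eq_zero_or_eq_succ j with h0 | ⟨j', rfl⟩
      · exact absurd h0 hj
      · simp [Fin.cons_succ]
    have hglip : ∀ (i : Fin m) (x' y' : ∀ i : Fin m, K i.succ),
        (∀ j, j ≠ i → x' j = y' j) → |g x' - g y'| ≤ c i.succ := by
      intro i x' y' hagree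
      rw [hg]
      simp only
      rw [← Finset.sum_sub_distrib]
      have : ∀ k, w 0 k * f (Fin.cons k x') - w 0 k * f (Fin.cons k y') =
          w 0 k * (f (Fin.cons k x') - f (Fin.cons k y')) := fun k => by ring
      rw [Finset.sum_congr rfl (fun k _ => this k)]
      calc |∑ k, w 0 k * (f (Fin.cons k x') - f (Fin.cons k y'))|
          ≤ ∑ k, |w 0 k * (f (Fin.cons k x') - f (Fin.cons k y'))| :=
            Finset.abs_sum_le_sum_abs _ _
        _ ≤ ∑ k, w 0 k * c i.succ := by
            apply Finset.sum_le_sum; intro k _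
            rw [abs_mul, abs_of_nonneg (hw 0 k)]
            apply mul_le_mul_of_nonneg_left _ (hw 0 k)
            apply hlip i.succ
            intro j hj
            rcases Fin.eq_zero_or_eq_succ j with rfl | ⟨j', rfl⟩
            · simp [Fin.cons_zero]
            · simp only [Fin.cons_succ]
              exact hagree j' (fun h => hj (by rw [h]))
        _ = c i.succ := by rw [← Finset.sum_mul, hw1, one_mul]
    calc ∑ x : ∀ i, K i, (∏ i, w i (x i)) * Real.exp (l * (f x - Ef))
        = ∑ x', ∑ k, (w 0 k * W' x') * Real.exp (l * (f (Fin.cons k x') - Ef)) := by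
          rw [sumdec (fun x => (∏ i, w i (x i)) * Real.exp (l * (f x - Ef)))]
          exact Finset.sum_congr rfl fun x' _ => Finset.sum_congr rfl fun k _ => by
            rw [proddec]
      _ = ∑ x', (W' x' * Real.exp (l * (g x' - Ef))) *
            (∑ k, w 0 k * Real.exp (l * (f (Fin.cons k x') - g x'))) := by
          apply Finset.sum_congr rfl; intro x' _
          rw [Finset.mul_sum]
          apply Finset.sum_congr rfl; intro k _
          have e : Real.exp (l * (f (Fin.cons k x') - Ef)) =
              Real.exp (l * (g x' - Ef)) * Real.exp (l * (f (Fin.cons k x') - g x')) := by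
            rw [← Real.exp_add]; ring_nf
          rw [e]; ring
      _ ≤ ∑ x', (W' x' * Real.exp (l * (g x' - Ef))) * Real.exp (l ^ 2 * (c 0) ^ 2 / 2) := by
          apply Finset.sum_le_sum; intro x' _
          apply mul_le_mul_of_nonneg_left _ (mul_nonneg (hW'nn x') (Real.exp_nonneg _))
          exact step_mgf (w 0) (hw 0) (hw1 0) (fun k => f (Fin.cons k x')) (c 0)
            (hosc0 x') l
      _ = Real.exp (l ^ 2 * (c 0) ^ 2 / 2) *
            ∑ x', W' x' * Real.exp (l * (g x' - ∑ y', W' y' * g y')) := by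
          rw [Finset.mul_sum, ← hEfg]
          apply Finset.sum_congr rfl; intro x' _; ring
      _ ≤ Real.exp (l ^ 2 * (c 0) ^ 2 / 2) *
            Real.exp (l ^ 2 * (∑ i : Fin m, c i.succ ^ 2) / 2) := by
          apply mul_le_mul_of_nonneg_left _ (Real.exp_nonneg _)
          exact ih (fun i => K i.succ) (fun i => w i.succ) (fun i k => hw i.succ k)
            (fun i => hw1 i.succ) g (fun i => c i.succ) hglip l
      _ = Real.exp (l ^ 2 * (∑ i : Fin (m + 1), c i ^ 2) / 2) := by
          rw [← Real.exp_add, Fin.sum_univ_succ]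
          ring_nf

lemma chernoff_aux {X : Type} [Fintype X] (W : X → ℝ) (hW : ∀ x, 0 ≤ W x)
    (F : X → ℝ) (V t : ℝ) (hV : 0 < V) (ht : 0 ≤ t)
    (hmgf : ∀ l : ℝ, ∑ x, W x * Real.exp (l * F x) ≤ Real.exp (l ^ 2 * V / 2)) :
    ∑ x ∈ univ.filter (fun x => F x > t), W x ≤ Real.exp (-t ^ 2 / (2 * V)) := by
  set l : ℝ := t / V with hl
  have hl0 : 0 ≤ l := div_nonneg ht hV.le
  calc ∑ x ∈ univ.filter (fun x => F x > t), W x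
      ≤ ∑ x ∈ univ.filter (fun x => F x > t), W x * (Real.exp (l * F x) * Real.exp (-(l * t))) := by
        apply Finset.sum_le_sum; intro x hx
        rw [Finset.mem_filter] at hx
        have h1 : (1:ℝ) ≤ Real.exp (l * F x) * Real.exp (-(l * t)) := by
          rw [← Real.exp_add, ← Real.exp_zero]
          apply Real.exp_le_exp.mpr
          have := mul_le_mul_of_nonneg_left hx.2.le hl0
          linarith
        nlinarith [hW x]
    _ = Real.exp (-(l * t)) * ∑ x ∈ univ.filter (fun x => F x > t), W x * Real.exp (l * F x) := by
        rw [Finset.mul_sum]; apply Finset.sum_congr rfl; intro x _; ring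
    _ ≤ Real.exp (-(l * t)) * ∑ x, W x * Real.exp (l * F x) := by
        apply mul_le_mul_of_nonneg_left _ (Real.exp_nonneg _)
        apply Finset.sum_le_sum_of_subset_of_nonneg (Finset.filter_subset _ _)
        intro x _ _
        exact mul_nonneg (hW x) (Real.exp_nonneg _)
    _ ≤ Real.exp (-(l * t)) * Real.exp (l ^ 2 * V / 2) :=
        mul_le_mul_of_nonneg_left (hmgf l) (Real.exp_nonneg _)
    _ = Real.exp (-t ^ 2 / (2 * V)) := by
        rw [← Real.exp_add]
        congr 1
        rw [hl]
        field_simp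
        ring

theorem mcdiarmid (m : ℕ) (K : Fin m → Type) [inst : ∀ i, Fintype (K i)]
    (w : ∀ i, K i → ℝ) (hw : ∀ i k, 0 ≤ w i k) (hw1 : ∀ i, ∑ k, w i k = 1)
    (f : (∀ i, K i) → ℝ) (c : Fin m → ℝ)
    (hlip : ∀ (i : Fin m) (x y : ∀ i, K i), (∀ j, j ≠ i → x j = y j) → |f x - f y| ≤ c i)
    (t : ℝ) (ht : 0 ≤ t) (hV : 0 < ∑ i, c i ^ 2) :
    ∑ x ∈ univ.filter
        (fun x => |f x - ∑ y : ∀ i, K i, (∏ i, w i (y i)) * f y| > t), (∏ i, w i (x i))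
      ≤ 2 * Real.exp (-t ^ 2 / (2 * ∑ i, c i ^ 2)) := by
  classical
  set W : (∀ i, K i) → ℝ := fun x => ∏ i, w i (x i) with hW
  set Ef : ℝ := ∑ y : ∀ i, K i, W y * f y with hEf
  set V : ℝ := ∑ i, c i ^ 2 with hV'
  have hWnn : ∀ x, 0 ≤ W x := fun x => Finset.prod_nonneg (fun i _ => hw _ _)
  have h1 : ∑ x ∈ univ.filter (fun x => f x - Ef > t), W x ≤ Real.exp (-t ^ 2 / (2 * V)) := by
    apply chernoff_aux W hWnn (fun x => f x - Ef) V t hV ht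
    intro l
    exact mcdiarmid_mgf m K w hw hw1 f c hlip l
  have h2 : ∑ x ∈ univ.filter (fun x => Ef - f x > t), W x ≤ Real.exp (-t ^ 2 / (2 * V)) := by
    apply chernoff_aux W hWnn (fun x => Ef - f x) V t hV ht
    intro l
    have e : ∀ x, l * (Ef - f x) = (-l) * (f x - Ef) := fun x => by ring
    simp only [e]
    have := mcdiarmid_mgf m K w hw hw1 f c hlip (-l)
    rwa [neg_pow, neg_one_pow_eq_one_iff_even (by norm_num) |>.mpr (by norm_num), one_mul]
      at this
  have hsub : univ.filter (fun x => |f x - Ef| > t) ⊆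
      univ.filter (fun x => f x - Ef > t) ∪ univ.filter (fun x => Ef - f x > t) := by
    intro x hx
    rw [Finset.mem_filter] at hx
    rcases lt_abs.mp hx.2 with h | h
    · exact Finset.mem_union_left _ (Finset.mem_filter.mpr ⟨Finset.mem_univ _, h⟩)
    · exact Finset.mem_union_right _ (Finset.mem_filter.mpr ⟨Finset.mem_univ _, by linarith⟩)
  calc ∑ x ∈ univ.filter (fun x => |f x - Ef| > t), W x
      ≤ ∑ x ∈ (univ.filter (fun x => f x - Ef > t) ∪ univ.filter (fun x => Ef - f x > t)),
          W x := Finset.sum_le_sum_of_subset_of_nonneg hsub (fun x _ _ => hWnn x)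
    _ = ∑ x ∈ univ.filter (fun x => f x - Ef > t), W x +
          ∑ x ∈ univ.filter (fun x => Ef - f x > t), W x := by
        apply Finset.sum_union
        rw [Finset.disjoint_filter]
        intro x _ h1' h2'
        linarith
    _ ≤ 2 * Real.exp (-t ^ 2 / (2 * V)) := by linarith

lemma pullback_copy {α : Type*} (H : SimpleGraph α) {M M' : ℕ} (g : Fin M ↪ Fin M')
    (χ : Sym2 (Fin M') → Bool) (h : HasMonoCopy H M (fun e => χ (e.map g))) :
    HasMonoCopy H M' χ := by
  obtain ⟨b, f, hf⟩ := h
  refine ⟨b, f.trans g, fun u v huv => ?_⟩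
  have := hf u v huv
  simpa [Sym2.map_pair_eq] using this

lemma copy_in_subset {α : Type*} (H : SimpleGraph α) {N R : ℕ}
    (hR : ∀ χ : Sym2 (Fin R) → Bool, HasMonoCopy H R χ)
    (χ : Sym2 (Fin N) → Bool) (A : Finset (Fin N)) (hA : R ≤ A.card) :
    ∃ (b : Bool) (f : α ↪ Fin N), (∀ u, f u ∈ A) ∧
      ∀ u v, H.Adj u v → χ s(f u, f v) = b := by
  obtain ⟨b, f, hf⟩ := hR (fun e =>
    χ (e.map ((Fin.castLEEmb hA).trans (A.orderEmbOfFin rfl).toEmbedding)))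
  refine ⟨b, f.trans ((Fin.castLEEmb hA).trans (A.orderEmbOfFin rfl).toEmbedding),
    fun u => ?_, fun u v huv => ?_⟩
  · exact A.orderEmbOfFin_mem rfl _
  · have := hf u v huv
    simpa [Sym2.map_pair_eq] using this

lemma clique_greedy {N R : ℕ} (χ : Sym2 (Fin N) → Bool) (b : Bool) (hR1 : 1 ≤ R) :
    ∀ (k : ℕ) (C : Finset (Fin N)),
      (∀ w ∈ C, (C.filter (fun u => u ≠ w ∧ χ s(w, u) ≠ b)).card + 1 ≤ R) →
      k * R ≤ C.card →
      ∃ S : Finset (Fin N), S ⊆ C ∧ S.card = k ∧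
        ∀ u ∈ S, ∀ v ∈ S, u ≠ v → χ s(u, v) = b := by
  intro k
  induction k with
  | zero => intro C _ _; exact ⟨∅, Finset.empty_subset _, rfl, by simp⟩
  | succ k ih =>
    intro C hdeg hcard
    have hkR : (k + 1) * R = k * R + R := by ring
    have hCne : C.Nonempty := by
      apply Finset.card_pos.mp
      have : 0 < (k + 1) * R := Nat.mul_pos k.succ_pos hR1
      omega
    obtain ⟨w, hw⟩ := hCne
    set C' : Finset (Fin N) := C.filter (fun u => u ≠ w ∧ χ s(w, u) = b) with hC'
    have hsub : C' ⊆ C := Finset.filter_subset _ _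
    have hcard' : k * R ≤ C'.card := by
      have hsplit := Finset.card_filter_add_card_filter_not
        (s := C) (p := fun u => u ≠ w ∧ χ s(w, u) = b)
      have hbad : C.filter (fun u => ¬(u ≠ w ∧ χ s(w, u) = b)) ⊆
          insert w (C.filter (fun u => u ≠ w ∧ χ s(w, u) ≠ b)) := by
        intro u hu
        rw [Finset.mem_filter] at hu
        by_cases huw : u = w
        · subst huw; exact Finset.mem_insert_self _ _
        · refine Finset.mem_insert_of_mem (Finset.mem_filter.mpr ⟨hu.1, huw, ?_⟩)
          have := hu.2
          tauto
      have hbadcard : (C.filter (fun u => ¬(u ≠ w ∧ χ s(w, u) = b))).card ≤ R := by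
        calc (C.filter (fun u => ¬(u ≠ w ∧ χ s(w, u) = b))).card
            ≤ (insert w (C.filter (fun u => u ≠ w ∧ χ s(w, u) ≠ b))).card :=
              Finset.card_le_card hbad
          _ ≤ (C.filter (fun u => u ≠ w ∧ χ s(w, u) ≠ b)).card + 1 :=
              Finset.card_insert_le _ _
          _ ≤ R := hdeg w hw
      have hCC : C'.card = (C.filter (fun u => u ≠ w ∧ χ s(w, u) = b)).card := by rw [hC']
      omega
    have hdeg' : ∀ w' ∈ C', (C'.filter (fun u => u ≠ w' ∧ χ s(w', u) ≠ b)).card + 1 ≤ R := by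
      intro w' hw'
      have : (C'.filter (fun u => u ≠ w' ∧ χ s(w', u) ≠ b)).card ≤
          (C.filter (fun u => u ≠ w' ∧ χ s(w', u) ≠ b)).card :=
        Finset.card_le_card (Finset.filter_subset_filter _ hsub)
      have := hdeg w' (hsub hw')
      omega
    obtain ⟨S', hS'sub, hS'card, hS'mono⟩ := ih C' hdeg' hcard'
    have hwS' : w ∉ S' := fun h => by
      have := hS'sub h; rw [hC', Finset.mem_filter] at this; exact this.2.1 rfl
    refine ⟨insert w S', ?_, ?_, ?_⟩
    · intro x hx
      rcases Finset.mem_insert.mp hx with rfl | hx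
      · exact hw
      · exact hsub (hS'sub hx)
    · rw [Finset.card_insert_of_notMem hwS', hS'card]
    · intro u hu v hv huv
      rcases Finset.mem_insert.mp hu with rfl | hu' <;>
        rcases Finset.mem_insert.mp hv with rfl | hv'
      · exact absurd rfl huv
      · exact ((Finset.mem_filter.mp (hS'sub hv')).2).2
      · have := ((Finset.mem_filter.mp (hS'sub hu')).2).2
        rwa [Sym2.eq_swap] at this
      · exact hS'mono u hu' v hv' huv

lemma clique_to_copy {α : Type*} [Fintype α] (G : SimpleGraph α) {N : ℕ}
    (χ : Sym2 (Fin N) → Bool) (b : Bool) (S : Finset (Fin N))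
    (hcard : S.card = Fintype.card α)
    (hmono : ∀ u ∈ S, ∀ v ∈ S, u ≠ v → χ s(u, v) = b) :
    HasMonoCopy G N χ := by
  have hce : Fintype.card α = Fintype.card ↥S := by rw [Fintype.card_coe, hcard]
  let e : α ≃ ↥S := Fintype.equivOfCardEq hce
  refine ⟨b, ⟨fun a => ↑(e a), fun a a' h => e.injective (Subtype.ext h)⟩, fun u v huv => ?_⟩
  exact hmono _ (e u).2 _ (e v).2 (fun h => G.ne_of_adj huv (e.injective (Subtype.ext h)))

theorem ramsey_one_vertex {α : Type*} [Fintype α] [DecidableEq α]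
    (G : SimpleGraph α) (i : α) (R : ℕ) (hR1 : 1 ≤ R)
    (hH : ∀ χ : Sym2 (Fin R) → Bool,
      HasMonoCopy (G.comap (fun v : {v : α // v ≠ i} => (v : α))) R χ)
    {N : ℕ} (hN : 8 * Fintype.card α * R ≤ N) :
    ∀ χ : Sym2 (Fin N) → Bool, HasMonoCopy G N χ := by
  classical
  intro χ
  set n := Fintype.card α with hn
  have hn1 : 1 ≤ n := Fintype.card_pos_iff.mpr ⟨i⟩
  have hN0 : 0 < N := by
    have : 8 * 1 * 1 ≤ 8 * n * R := by
      apply Nat.mul_le_mul (Nat.mul_le_mul_left _ hn1) hR1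
    omega
  set w₁ : Fin N := ⟨0, hN0⟩ with hw₁
  -- extension helper
  have ext_copy : ∀ (b' : Bool) (w : Fin N) (A : Finset (Fin N)),
      (∀ x ∈ A, x ≠ w ∧ χ s(w, x) = b') →
      ∀ (f : {v : α // v ≠ i} ↪ Fin N), (∀ u, f u ∈ A) →
      (∀ u v, (G.comap (fun v : {v : α // v ≠ i} => (v : α))).Adj u v → χ s(f u, f v) = b') →
      HasMonoCopy G N χ := by
    intro b' w A hA f hmem hmono
    have ginj : Function.Injective
        (fun v : α => if h : v = i then w else f ⟨v, h⟩) := by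
      intro a a' hab
      simp only at hab
      by_cases ha : a = i <;> by_cases ha' : a' = i
      · rw [ha, ha']
      · rw [dif_pos ha, dif_neg ha'] at hab
        exact absurd hab.symm (hA _ (hmem ⟨a', ha'⟩)).1
      · rw [dif_neg ha, dif_pos ha'] at hab
        exact absurd hab (hA _ (hmem ⟨a, ha⟩)).1
      · rw [dif_neg ha, dif_neg ha'] at hab
        have := f.injective hab
        exact congrArg Subtype.val this
    refine ⟨b', ⟨_, ginj⟩, fun u v huv => ?_⟩
    simp only [Function.Embedding.coeFn_mk]
    by_cases hu : u = i <;> by_cases hv : v = i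
    · exact absurd (hu.trans hv.symm) (G.ne_of_adj huv)
    · rw [dif_pos hu, dif_neg hv]
      exact (hA _ (hmem ⟨v, hv⟩)).2
    · rw [dif_neg hu, dif_pos hv]
      rw [Sym2.eq_swap]
      exact (hA _ (hmem ⟨u, hu⟩)).2
    · rw [dif_neg hu, dif_neg hv]
      exact hmono ⟨u, hu⟩ ⟨v, hv⟩ (by simpa using huv)
  -- majority neighborhood
  have hsplit : ((univ.filter (fun x => x ≠ w₁ ∧ χ s(w₁, x) = true)).card +
      (univ.filter (fun x => x ≠ w₁ ∧ χ s(w₁, x) = false)).card) = N - 1 := by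
    rw [← Finset.card_union_of_disjoint]
    · have : (univ.filter (fun x => x ≠ w₁ ∧ χ s(w₁, x) = true)) ∪
          (univ.filter (fun x => x ≠ w₁ ∧ χ s(w₁, x) = false)) = univ.erase w₁ := by
        ext x
        simp only [Finset.mem_union, Finset.mem_filter, Finset.mem_erase, Finset.mem_univ,
          true_and, and_true]
        cases hxx : χ s(w₁, x) <;> tauto
      rw [this, Finset.card_erase_of_mem (Finset.mem_univ _), Finset.card_univ,
        Fintype.card_fin]
    · rw [Finset.disjoint_filter]
      intro x _ h1 h2
      rw [h1.2] at h2
      exact absurd h2.2 (by simp)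
  have hmaj : ∃ b : Bool, 4 * n * R ≤ (univ.filter (fun x => x ≠ w₁ ∧ χ s(w₁, x) = b)).card := by
    by_contra hcon
    push_neg at hcon
    have h1 := hcon true
    have h2 := hcon false
    have h8 : 8 * n * R = 4 * n * R + 4 * n * R := by ring
    omega
  obtain ⟨b, hB⟩ := hmaj
  set B₁ := univ.filter (fun x => x ≠ w₁ ∧ χ s(w₁, x) = b) with hB₁
  have hB₁prop : ∀ x ∈ B₁, x ≠ w₁ ∧ χ s(w₁, x) = b := by
    intro x hx; exact (Finset.mem_filter.mp hx).2
  by_cases hA : ∃ f : {v : α // v ≠ i} ↪ Fin N, (∀ u, f u ∈ B₁) ∧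
      ∀ u v, (G.comap (fun v : {v : α // v ≠ i} => (v : α))).Adj u v → χ s(f u, f v) = b
  · obtain ⟨f, hmem, hmono⟩ := hA
    exact ext_copy b w₁ B₁ hB₁prop f hmem hmono
  · by_cases hB1 : ∃ w ∈ B₁, R ≤ (B₁.filter (fun u => u ≠ w ∧ χ s(w, u) = !b)).card
    · obtain ⟨w, hwB, hwcard⟩ := hB1
      obtain ⟨b', f, hmem, hmono⟩ := copy_in_subset _ hH χ _ hwcard
      have hmemB₁ : ∀ u, f u ∈ B₁ := fun u => (Finset.filter_subset _ _) (hmem u)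
      by_cases hb' : b' = b
      · exact absurd ⟨f, hmemB₁, fun u v huv => (hmono u v huv).trans hb'⟩ hA
      · have hb'' : b' = !b := by cases b' <;> cases b <;> first | rfl | exact absurd rfl hb'
        refine ext_copy (!b) w (B₁.filter (fun u => u ≠ w ∧ χ s(w, u) = !b)) ?_ f hmem
          (fun u v huv => (hmono u v huv).trans hb'')
        intro x hx
        exact (Finset.mem_filter.mp hx).2
    · push_neg at hB1
      have hdeg : ∀ w ∈ B₁, (B₁.filter (fun u => u ≠ w ∧ χ s(w, u) ≠ b)).card + 1 ≤ R := by
        intro w hw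
        have h1 := hB1 w hw
        have hbool : ∀ (x y : Bool), (¬ x = y) ↔ x = !y := by decide
        have heq : B₁.filter (fun u => u ≠ w ∧ χ s(w, u) ≠ b) =
            B₁.filter (fun u => u ≠ w ∧ χ s(w, u) = !b) := by
          apply Finset.filter_congr
          intro x _
          simp only [ne_eq, hbool]
        rw [heq]
        omega
      have hsize : n * R ≤ B₁.card := le_trans (by nlinarith) hB
      obtain ⟨S, hSsub, hScard, hSmono⟩ := clique_greedy χ b hR1 n B₁ hdeg hsize
      exact clique_to_copy G χ b S (by rw [hScard]) hSmono

theorem ramsey_exists' : ∀ (n : ℕ) (α : Type) [Fintype α] [DecidableEq α],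
    Fintype.card α = n → ∀ G : SimpleGraph α,
    ∃ N, ∀ χ : Sym2 (Fin N) → Bool, HasMonoCopy G N χ := by
  intro n
  induction n using Nat.strong_induction_on with
  | _ n ih =>
    intro α _ _ hcard G
    rcases Nat.eq_zero_or_pos n with rfl | hn
    · have : IsEmpty α := Fintype.card_eq_zero_iff.mp hcard
      exact ⟨0, fun χ => ⟨true, Function.Embedding.ofIsEmpty, fun u => (this.false u).elim⟩⟩
    · have : Nonempty α := Fintype.card_pos_iff.mp (hcard ▸ hn)
      obtain ⟨i⟩ := this
      have hcard' : Fintype.card {v : α // v ≠ i} = n - 1 := by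
        rw [← hcard]
        rw [Fintype.card_subtype_compl (p := fun v => v = i)]
        simp [Fintype.card_subtype_eq]
      obtain ⟨R₀, hR₀⟩ := ih (n - 1) (by omega) {v : α // v ≠ i} hcard'
        (G.comap (fun v : {v : α // v ≠ i} => (v : α)))
      refine ⟨8 * Fintype.card α * (max R₀ 1), ?_⟩
      apply ramsey_one_vertex G i (max R₀ 1) (le_max_right _ _) _ (le_refl _)
      intro χ
      exact pullback_copy _ (Fin.castLEEmb (le_max_left R₀ 1)) χ (hR₀ _)

theorem ramsey_exists (α : Type) [Fintype α] [DecidableEq α] (G : SimpleGraph α) :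
    ∃ N, ∀ χ : Sym2 (Fin N) → Bool, HasMonoCopy G N χ :=
  ramsey_exists' (Fintype.card α) α rfl G

theorem ramsey_spec (α : Type) [Fintype α] [DecidableEq α] (G : SimpleGraph α) :
    ∀ χ : Sym2 (Fin (ramseyNumber G)) → Bool, HasMonoCopy G (ramseyNumber G) χ :=
  Nat.sInf_mem (ramsey_exists α G)

theorem ramsey_pos (α : Type) [Fintype α] [DecidableEq α] [Nonempty α] (G : SimpleGraph α) :
    1 ≤ ramseyNumber G := by
  by_contra h
  push_neg at h
  interval_cases h' : ramseyNumber G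
  · have := ramsey_spec α G
    rw [h'] at this
    obtain ⟨b, f, -⟩ := this (fun _ => true)
    exact (f (Classical.arbitrary α)).elim0

theorem ramsey_le (α : Type) [Fintype α] [DecidableEq α] (G : SimpleGraph α) (N : ℕ)
    (h : ∀ χ : Sym2 (Fin N) → Bool, HasMonoCopy G N χ) : ramseyNumber G ≤ N :=
  Nat.sInf_le h

theorem ramsey_diff {n : ℕ} (G G' : SimpleGraph (Fin n)) (i : Fin n)
    (hdiff : ∀ u v : Fin n, u ≠ i → v ≠ i → (G.Adj u v ↔ G'.Adj u v)) :
    ramseyNumber G ≤ 8 * n * ramseyNumber G' := by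
  have : Nonempty (Fin n) := ⟨i⟩
  set R := ramseyNumber G' with hR
  apply ramsey_le
  apply ramsey_one_vertex G i R (ramsey_pos _ G')
  · intro χ
    obtain ⟨b, f, hf⟩ := ramsey_spec _ G' χ
    refine ⟨b, (Function.Embedding.subtype _).trans f, fun u v huv => ?_⟩
    apply hf
    have : G.Adj ↑u ↑v := by simpa using huv
    exact (hdiff u v u.2 v.2).mp this
  · rw [Fintype.card_fin]

-- weights
noncomputable def wR (p : ENNReal) : Bool → ℝ := fun s => if s then p.toReal else 1 - p.toReal

noncomputable def Wt (n : ℕ) (p : ENNReal) (ω : ErdosRenyiOmega n) : ℝ := ∏ e, wR p (ω e)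

lemma ptoReal_le_one {p : ENNReal} (hp : p ≤ 1) : p.toReal ≤ 1 := by
  have := ENNReal.toReal_mono (by norm_num) hp
  simpa using this

lemma wR_true (p : ENNReal) : wR p true = p.toReal := by simp [wR]

lemma wR_false (p : ENNReal) : wR p false = 1 - p.toReal := by simp [wR]

lemma wR_nonneg {p : ENNReal} (hp : p ≤ 1) (s : Bool) : 0 ≤ wR p s := by
  cases s
  · rw [wR_false]; linarith [ptoReal_le_one hp]
  · rw [wR_true]; exact ENNReal.toReal_nonneg

lemma wR_sum {p : ENNReal} (hp : p ≤ 1) : wR p true + wR p false = 1 := by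
  simp [wR]

lemma Wt_nonneg {n : ℕ} {p : ENNReal} (hp : p ≤ 1) (ω : ErdosRenyiOmega n) : 0 ≤ Wt n p ω :=
  Finset.prod_nonneg fun e _ => wR_nonneg hp _

lemma mu_singleton (n : ℕ) (p : ENNReal) (hp : p ≤ 1) (ω : ErdosRenyiOmega n) :
    erdosRenyi n p hp {ω} = ENNReal.ofReal (Wt n p ω) := by
  have hpt : p ≠ ⊤ := ne_top_of_le_ne_top ENNReal.one_ne_top hp
  rw [erdosRenyi, ← Set.univ_pi_singleton, Measure.pi_pi, Wt,
    ENNReal.ofReal_prod_of_nonneg (fun e _ => wR_nonneg hp _)]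
  apply Finset.prod_congr rfl
  intro e _
  rw [PMF.toMeasure_apply_singleton _ _ (measurableSet_singleton _)]; erw [PMF.bernoulli_apply]
  cases hs : ω e
  · have e1 : wR p false = 1 - p.toReal := by simp [wR]
    have e2 : ((1:ENNReal) - p).toReal = 1 - p.toReal := by
      rw [ENNReal.toReal_sub_of_le hp ENNReal.one_ne_top, ENNReal.toReal_one]
    rw [e1, Bool.cond_false, ← e2,
      ENNReal.ofReal_toReal (ne_top_of_le_ne_top ENNReal.one_ne_top tsub_le_self),
      ENNReal.coe_sub, ENNReal.coe_one, ENNReal.coe_toNNReal hpt]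
  · have e1 : wR p true = p.toReal := by simp [wR]
    rw [e1, Bool.cond_true, ENNReal.ofReal_toReal hpt, ENNReal.coe_toNNReal hpt]

lemma mu_set (n : ℕ) (p : ENNReal) (hp : p ≤ 1) (P : ErdosRenyiOmega n → Prop)
    [DecidablePred P] :
    erdosRenyi n p hp {ω | P ω} =
      ENNReal.ofReal (∑ ω ∈ Finset.univ.filter P, Wt n p ω) := by
  have h1 : {ω | P ω} = ⋃ ω ∈ Finset.univ.filter P, ({ω} : Set (ErdosRenyiOmega n)) := by
    ext ω; simp
  rw [h1, measure_biUnion_finset ?_ (fun ω _ => measurableSet_singleton ω),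
    ENNReal.ofReal_sum_of_nonneg (fun ω _ => Wt_nonneg hp ω)]
  · exact Finset.sum_congr rfl fun ω _ => mu_singleton n p hp ω
  · intro a _ b _ hab
    simp [Set.disjoint_singleton, hab]

lemma integral_eq_sum (n : ℕ) (p : ENNReal) (hp : p ≤ 1) (f : ErdosRenyiOmega n → ℝ) :
    ∫ ω, f ω ∂(erdosRenyi n p hp) = ∑ ω, Wt n p ω * f ω := by
  have hprob : IsProbabilityMeasure (erdosRenyi n p hp) := by
    unfold erdosRenyi; infer_instance
  rw [integral_fintype .of_finite]
  apply Finset.sum_congr rfl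
  intro ω _
  rw [measureReal_def, mu_singleton n p hp ω, ENNReal.toReal_ofReal (Wt_nonneg hp ω), smul_eq_mul]

-- grouping by max vertex
def vmax {n : ℕ} (e : Sym2 (Fin n)) : Fin n :=
  Sym2.lift ⟨fun a b => max a b, fun a b => max_comm a b⟩ e

@[simp] lemma vmax_mk {n : ℕ} (u v : Fin n) : vmax s(u, v) = max u v := rfl

def Kv (n : ℕ) (i : Fin n) : Type :=
  {e : {e : Sym2 (Fin n) // ¬ e.IsDiag} // vmax e.1 = i} → Bool

instance (n : ℕ) (i : Fin n) : Fintype (Kv n i) := by unfold Kv; infer_instance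

def Φ (n : ℕ) : ErdosRenyiOmega n ≃ ∀ i, Kv n i where
  toFun ω := fun i e' => ω e'.1
  invFun x := fun e => x (vmax e.1) ⟨e, rfl⟩
  left_inv ω := rfl
  right_inv x := by
    funext i e'
    obtain ⟨e, he⟩ := e'
    subst he
    rfl

lemma Φ_symm_apply' {n : ℕ} (x : ∀ i, Kv n i) (i : Fin n)
    (e' : {e : {e : Sym2 (Fin n) // ¬ e.IsDiag} // vmax e.1 = i}) :
    (Φ n).symm x e'.1 = x i e' := by
  obtain ⟨e, he⟩ := e'
  subst he
  rfl

noncomputable def wK (n : ℕ) (p : ENNReal) (i : Fin n) (k : Kv n i) : ℝ :=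
  ∏ e', wR p (k e')

lemma wK_nonneg {n : ℕ} {p : ENNReal} (hp : p ≤ 1) (i : Fin n) (k : Kv n i) :
    0 ≤ wK n p i k :=
  Finset.prod_nonneg fun e _ => wR_nonneg hp _

lemma wK_sum {n : ℕ} {p : ENNReal} (hp : p ≤ 1) (i : Fin n) :
    ∑ k : Kv n i, wK n p i k = 1 := by
  classical
  unfold wK Kv
  rw [← Fintype.prod_sum (fun (e' : {e : {e : Sym2 (Fin n) // ¬ e.IsDiag} // vmax e.1 = i})
    (s : Bool) => wR p s)]
  rw [Finset.prod_congr rfl (fun e' _ => by rw [Fintype.sum_bool, wR_sum hp])]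
  exact Finset.prod_const_one

lemma Wt_group {n : ℕ} (p : ENNReal) (x : ∀ i, Kv n i) :
    Wt n p ((Φ n).symm x) = ∏ i, wK n p i (x i) := by
  classical
  unfold Wt wK
  rw [← Equiv.prod_comp (Equiv.sigmaFiberEquiv
    (fun e : {e : Sym2 (Fin n) // ¬ e.IsDiag} => vmax e.1))
    (fun e => wR p ((Φ n).symm x e))]
  rw [← Finset.univ_sigma_univ, Finset.prod_sigma]
  apply Finset.prod_congr rfl
  intro i _
  apply Finset.prod_congr rfl
  intro e' _
  rw [show (Equiv.sigmaFiberEquiv (fun e : {e : Sym2 (Fin n) // ¬ e.IsDiag} => vmax e.1))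
      ⟨i, e'⟩ = e'.1 from rfl, Φ_symm_apply']

lemma logb_ratio {n a b : ℕ} (ha : 1 ≤ a) (hb : 1 ≤ b) (hab : a ≤ 8 * n * b) :
    Real.logb 2 a - Real.logb 2 b ≤ Real.logb 2 (8 * n) := by
  have hn1 : 1 ≤ n := by nlinarith
  have h8n : (0:ℝ) < 8 * n := by positivity
  have hbR : (0:ℝ) < b := by exact_mod_cast hb
  have haR : (0:ℝ) < a := by exact_mod_cast ha
  have hcast : (a:ℝ) ≤ (8 * n : ℝ) * b := by exact_mod_cast hab
  have h1 : Real.logb 2 a ≤ Real.logb 2 ((8 * n : ℝ) * b) :=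
    Real.logb_le_logb_of_le one_lt_two haR hcast
  rw [Real.logb_mul (ne_of_gt h8n) (ne_of_gt hbR)] at h1
  linarith

lemma lipschitz_logRamsey {n : ℕ} (i : Fin n) (x y : ∀ i, Kv n i)
    (hagree : ∀ j, j ≠ i → x j = y j) :
    |logRamsey n ((Φ n).symm x) - logRamsey n ((Φ n).symm y)| ≤ Real.logb 2 (8 * n) := by
  classical
  have hne : Nonempty (Fin n) := ⟨i⟩
  set ω := (Φ n).symm x with hω
  set ω' := (Φ n).symm y with hω'
  have hdiff : ∀ u v : Fin n, u ≠ i → v ≠ i →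
      ((sampleGraph n ω).Adj u v ↔ (sampleGraph n ω').Adj u v) := by
    intro u v hu hv
    by_cases huv : u = v
    · subst huv; simp
    · have hnd : ¬ (s(u, v) : Sym2 (Fin n)).IsDiag := by
        rw [Sym2.mk_isDiag_iff]; exact huv
      have hvm : vmax (s(u, v) : Sym2 (Fin n)) ≠ i := by
        rw [vmax_mk]
        rcases max_choice u v with h | h <;> rw [h] <;> assumption
      have heq : ω ⟨s(u, v), hnd⟩ = ω' ⟨s(u, v), hnd⟩ := by
        show x (vmax (s(u,v) : Sym2 (Fin n))) ⟨⟨s(u,v), hnd⟩, rfl⟩ =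
          y (vmax (s(u,v) : Sym2 (Fin n))) ⟨⟨s(u,v), hnd⟩, rfl⟩
        rw [hagree _ hvm]
      unfold sampleGraph
      rw [SimpleGraph.fromEdgeSet_adj, SimpleGraph.fromEdgeSet_adj]
      simp only [Set.mem_setOf_eq]
      constructor
      · rintro ⟨⟨hd, hw⟩, hne'⟩
        exact ⟨⟨hd, by rw [← heq]; exact hw⟩, hne'⟩
      · rintro ⟨⟨hd, hw⟩, hne'⟩
        exact ⟨⟨hd, by rw [heq]; exact hw⟩, hne'⟩
  have h1 := ramsey_diff (sampleGraph n ω) (sampleGraph n ω') i hdiff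
  have h2 := ramsey_diff (sampleGraph n ω') (sampleGraph n ω) i
    (fun u v hu hv => (hdiff u v hu hv).symm)
  have hr1 : 1 ≤ ramseyNumber (sampleGraph n ω) := ramsey_pos _ _
  have hr2 : 1 ≤ ramseyNumber (sampleGraph n ω') := ramsey_pos _ _
  rw [abs_le]
  constructor
  · have := logb_ratio hr2 hr1 h2
    unfold logRamsey
    linarith
  · exact logb_ratio hr1 hr2 h1

/-- Concentration of Ramsey numbers of random graphs: for `G = G_{n,p}` and any `t ≥ 0`,
`P[|log r(G) − E log r(G)| > t] ≤ 2 exp(−t²/(32 n log² n))` (logs base 2). -/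
theorem concentration_logRamsey_random_graph (n : ℕ) (hn : 0 < n)
    (p : ENNReal) (hp : p ≤ 1) (t : ℝ) (ht : 0 ≤ t) :
    erdosRenyi n p hp
        {ω : ErdosRenyiOmega n |
          |logRamsey n ω - ∫ ω', logRamsey n ω' ∂(erdosRenyi n p hp)| > t} ≤
      ENNReal.ofReal
        (2 * Real.exp (-(t ^ 2) / (32 * n * (Real.logb 2 n) ^ 2))) := by
  classical
  have hprob : IsProbabilityMeasure (erdosRenyi n p hp) := by
    unfold erdosRenyi; infer_instance
  rcases Nat.lt_or_ge n 2 with h1 | h2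
  · -- n = 1
    have hn1 : n = 1 := by omega
    subst hn1
    have hE : IsEmpty {e : Sym2 (Fin 1) // ¬ e.IsDiag} := by
      constructor
      rintro ⟨e, he⟩
      induction e using Sym2.ind with
      | _ u v => exact he (by rw [Sym2.mk_isDiag_iff]; exact Subsingleton.elim u v)
    have hsub : Subsingleton (ErdosRenyiOmega 1) :=
      ⟨fun a b => funext fun e => (hE.false e).elim⟩
    have hempty : {ω : ErdosRenyiOmega 1 |
        |logRamsey 1 ω - ∫ ω', logRamsey 1 ω' ∂(erdosRenyi 1 p hp)| > t} = ∅ := by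
      refine Set.eq_empty_iff_forall_notMem.mpr (fun ω hω => ?_)
      have hc : (fun ω' : ErdosRenyiOmega 1 => logRamsey 1 ω') =
          (fun _ => logRamsey 1 ω) := funext fun ω' => by rw [Subsingleton.elim ω' ω]
      rw [Set.mem_setOf_eq, hc, integral_const, probReal_univ,
        one_smul, sub_self, abs_zero] at hω
      linarith
    rw [hempty, measure_empty]
    exact zero_le
  · -- n ≥ 2
    set L : ℝ := Real.logb 2 (8 * n) with hL
    set l : ℝ := Real.logb 2 n with hl
    have hnR : (2:ℝ) ≤ n := by exact_mod_cast h2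
    have hl0 : 0 < l := Real.logb_pos one_lt_two (by linarith)
    have hL0 : 0 < L := Real.logb_pos one_lt_two (by linarith)
    have hL4 : L ≤ 4 * l := by
      have h3 : (8:ℝ) ≤ (n:ℝ) ^ 3 := by nlinarith [hnR, sq_nonneg ((n:ℝ) - 2), sq_nonneg ((n:ℝ) + 2)]
      have h84 : (8:ℝ) * n ≤ (n:ℝ) ^ (4:ℕ) := by nlinarith [h3]
      have := Real.logb_le_logb_of_le one_lt_two (by positivity : (0:ℝ) < 8 * n) h84
      rwa [Real.logb_pow] at this
    have hV : 0 < ∑ _i : Fin n, L ^ 2 := by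
      rw [Finset.sum_const, Finset.card_univ, Fintype.card_fin, nsmul_eq_mul]
      positivity
    have hmc := mcdiarmid n (Kv n) (wK n p) (fun i k => wK_nonneg hp i k)
      (fun i => wK_sum hp i) (fun x => logRamsey n ((Φ n).symm x)) (fun _ => L)
      (fun i x y hagree => lipschitz_logRamsey i x y hagree) t ht hV
    -- identify integral with weighted sum over the grouped space
    set F : (∀ i, Kv n i) → ℝ := fun x => logRamsey n ((Φ n).symm x) with hF
    have hI : ∫ ω', logRamsey n ω' ∂(erdosRenyi n p hp) =
        ∑ y : ∀ i, Kv n i, (∏ i, wK n p i (y i)) * F y := by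
      rw [integral_eq_sum n p hp]
      rw [← Equiv.sum_comp (Φ n) (fun y => (∏ i, wK n p i (y i)) * F y)]
      apply Finset.sum_congr rfl
      intro ω _
      rw [hF]
      simp only
      rw [← Wt_group p (Φ n ω), Equiv.symm_apply_apply]
    -- identify event measure with grouped sum
    have hMeq : erdosRenyi n p hp
        {ω : ErdosRenyiOmega n |
          |logRamsey n ω - ∫ ω', logRamsey n ω' ∂(erdosRenyi n p hp)| > t} =
        ENNReal.ofReal (∑ x ∈ univ.filter
          (fun x => |F x - ∑ y : ∀ i, Kv n i, (∏ i, wK n p i (y i)) * F y| > t),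
          (∏ i, wK n p i (x i))) := by
      rw [mu_set n p hp (fun ω =>
        |logRamsey n ω - ∫ ω', logRamsey n ω' ∂(erdosRenyi n p hp)| > t)]
      congr 1
      apply Finset.sum_equiv (Φ n)
      · intro ω
        simp only [Finset.mem_filter, Finset.mem_univ, true_and]
        rw [hI, hF]
        simp only [Equiv.symm_apply_apply]
      · intro ω _
        rw [← Wt_group p (Φ n ω), Equiv.symm_apply_apply]
    rw [hMeq]
    apply ENNReal.ofReal_le_ofReal
    refine le_trans hmc ?_
    -- final numeric comparison
    have hsum : ∑ _i : Fin n, L ^ 2 = n * L ^ 2 := by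
      rw [Finset.sum_const, Finset.card_univ, Fintype.card_fin, nsmul_eq_mul]
    rw [hsum]
    apply mul_le_mul_of_nonneg_left _ (by norm_num)
    apply Real.exp_le_exp.mpr
    have hd1 : (0:ℝ) < 2 * (n * L ^ 2) := by positivity
    have hLsq : L ^ 2 ≤ 16 * l ^ 2 := by nlinarith [hL0, hL4, hl0]
    have hd2 : 2 * (n * L ^ 2) ≤ 32 * n * l ^ 2 := by nlinarith [hLsq, hnR]
    have := div_le_div_of_nonneg_left (by positivity : (0:ℝ) ≤ t ^ 2) hd1 hd2
    rw [neg_div, neg_div]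
    linarith
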